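/- arXiv:2107.08584 — 6 statements merged into one kernel-verified Lean document; each statement's English description precedes it below -/
import Mathlib

section
/- Let (A,B) be a pair of perfectly matched sets in a graph G, and let C be a clique of G. If both A ∩ C and B ∩ C are nonempty, then |A ∩ C| = 1 and |B ∩ C| = 1, and the unique vertex of A ∩ C is matched to the unique vertex of B ∩ C. -/
/-- `(A, B)` is a pair of perfectly matched sets in `G`. -/
def IsPMS {V : Type*} (G : SimpleGraph V) (A B : Finset V) : Prop :=
  Disjoint A B ∧ (∀ a ∈ A, ∃! b, b ∈ B ∧ G.Adj a b) ∧ (∀ b ∈ B, ∃! a, a ∈ A ∧ G.Adj b a)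

/-- If `(A,B)` is a pair of perfectly matched sets and `C` is a clique with both
`A ∩ C` and `B ∩ C` nonempty, then `|A ∩ C| = 1 = |B ∩ C|` and the unique vertex of
`A ∩ C` is matched to (adjacent to) the unique vertex of `B ∩ C`. -/
theorem pms_clique_intersection {V : Type*} [DecidableEq V] (G : SimpleGraph V)
    (A B C : Finset V) (h : IsPMS G A B)
    (hC : ∀ u ∈ C, ∀ v ∈ C, u ≠ v → G.Adj u v)
    (hAC : (A ∩ C).Nonempty) (hBC : (B ∩ C).Nonempty) :
    (A ∩ C).card = 1 ∧ (B ∩ C).card = 1 ∧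
      ∀ a ∈ A ∩ C, ∀ b ∈ B ∩ C, G.Adj a b := by
  obtain ⟨hdisj, hA, hB⟩ := h
  have hadj : ∀ a ∈ A ∩ C, ∀ b ∈ B ∩ C, G.Adj a b := by
    intro a ha b hb
    simp only [Finset.mem_inter] at ha hb
    exact hC a ha.2 b hb.2 (fun hab => (Finset.disjoint_left.mp hdisj ha.1) (hab ▸ hb.1))
  refine ⟨?_, ?_, hadj⟩
  · obtain ⟨b, hb⟩ := hBC
    have hb' := Finset.mem_inter.mp hb
    obtain ⟨a0, _, ha0u⟩ := hB b hb'.1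
    rw [Finset.card_eq_one]
    obtain ⟨a, ha⟩ := hAC
    refine ⟨a, Finset.eq_singleton_iff_unique_mem.mpr ⟨ha, fun x hx => ?_⟩⟩
    rw [ha0u x ⟨(Finset.mem_inter.mp hx).1, (hadj x hx b hb).symm⟩,
        ha0u a ⟨(Finset.mem_inter.mp ha).1, (hadj a ha b hb).symm⟩]
  · obtain ⟨a, ha⟩ := hAC
    have ha' := Finset.mem_inter.mp ha
    obtain ⟨b0, _, hb0u⟩ := hA a ha'.1
    rw [Finset.card_eq_one]
    obtain ⟨b, hb⟩ := hBC
    refine ⟨b, Finset.eq_singleton_iff_unique_mem.mpr ⟨hb, fun x hx => ?_⟩⟩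
    rw [hb0u x ⟨(Finset.mem_inter.mp hx).1, hadj a ha x hx⟩,
        hb0u b ⟨(Finset.mem_inter.mp hb).1, hadj a ha b hb⟩]
end

section
/- Let G be a graph with vertex set {v_1, ..., v_n}, and let G' be the split graph with vertex set Y ∪ Z where Y = {y_1,...,y_n} is a clique, Z = {z_1,...,z_n} is an independent set, and y_j is adjacent to z_i if and only if v_j belongs to the closed neighborhood N[v_i] in G. Then G has an irredundant set of size k if and only if G' has a pair of perfectly matched sets of size k. -/
/-- `I` is an irredundant set in `G`: every `v ∈ I` has a private closed neighbor `p`,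
i.e. `p ∈ N[v]` and `N[p] ∩ I = {v}`. -/
def Irredundant {V : Type*} (G : SimpleGraph V) (I : Finset V) : Prop :=
  ∀ v ∈ I, ∃ p, (p = v ∨ G.Adj v p) ∧ ∀ u ∈ I, (u = p ∨ G.Adj u p) → u = v

/-- The split graph `G'` of the reduction: vertex set `Y ⊕ Z` with two copies of `V(G)`,
`Y` (the left summand) a clique, `Z` (the right summand) independent, and `y_j` adjacent
to `z_i` iff `v_j ∈ N[v_i]` in `G`. -/
def splitReduction {V : Type*} (G : SimpleGraph V) : SimpleGraph (V ⊕ V) :=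
  SimpleGraph.fromRel (fun x y =>
    match x, y with
    | Sum.inl _, Sum.inl _ => True
    | Sum.inl j, Sum.inr i => j = i ∨ G.Adj j i
    | _, _ => False)

lemma split_adj_lr {V : Type*} (G : SimpleGraph V) (j i : V) :
    (splitReduction G).Adj (Sum.inl j) (Sum.inr i) ↔ (j = i ∨ G.Adj j i) := by
  simp [splitReduction, SimpleGraph.fromRel_adj]

lemma split_adj_rl {V : Type*} (G : SimpleGraph V) (i j : V) :
    (splitReduction G).Adj (Sum.inr i) (Sum.inl j) ↔ (j = i ∨ G.Adj j i) := by
  rw [SimpleGraph.adj_comm]; exact split_adj_lr G j i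

lemma split_adj_ll {V : Type*} (G : SimpleGraph V) (a b : V) :
    (splitReduction G).Adj (Sum.inl a) (Sum.inl b) ↔ a ≠ b := by
  simp [splitReduction, SimpleGraph.fromRel_adj]

lemma split_adj_rr {V : Type*} (G : SimpleGraph V) (a b : V) :
    ¬ (splitReduction G).Adj (Sum.inr a) (Sum.inr b) := by
  simp [splitReduction, SimpleGraph.fromRel_adj]

lemma IsPMS.symm {V : Type*} {G : SimpleGraph V} {A B : Finset V} (h : IsPMS G A B) :
    IsPMS G B A := ⟨h.1.symm, h.2.2, h.2.1⟩

/-- Extraction lemma: if `(A,B)` is a PMS in the split graph and `A` lies entirely in `Z`,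
then `G` has an irredundant set of size `|A|`. -/
lemma extract_irredundant {V : Type*} [DecidableEq V] (G : SimpleGraph V)
    (A B : Finset (V ⊕ V)) (h : IsPMS (splitReduction G) A B)
    (hA : ∀ a ∈ A, ∃ v, a = Sum.inr v) :
    ∃ I : Finset V, I.card = A.card ∧ Irredundant G I := by
  refine ⟨A.image (Sum.elim id id), ?_, ?_⟩
  · apply Finset.card_image_of_injOn
    intro a ha a' ha' he
    obtain ⟨v, rfl⟩ := hA a ha
    obtain ⟨v', rfl⟩ := hA a' ha'
    simpa using he
  · have hmem : ∀ w, w ∈ A.image (Sum.elim id id) → Sum.inr w ∈ A := by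
      intro w hw
      obtain ⟨a, ha, hfa⟩ := Finset.mem_image.mp hw
      obtain ⟨v', rfl⟩ := hA a ha
      simp only [Sum.elim_inr, id] at hfa
      rwa [hfa] at ha
    intro v hv
    have hvA := hmem v hv
    obtain ⟨b, ⟨hbB, hadj⟩, _⟩ := h.2.1 _ hvA
    obtain (⟨j⟩ | ⟨i⟩) := b
    · rw [split_adj_rl] at hadj
      refine ⟨j, hadj.imp (fun h => h) (fun h => h.symm), ?_⟩
      intro u hu hup
      have huA := hmem u hu
      obtain ⟨a1, _, huniq⟩ := h.2.2 (Sum.inl j) hbB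
      have h1 : Sum.inr u = a1 := huniq _ ⟨huA, (split_adj_lr G j u).mpr
        (hup.imp (fun h => h.symm) (fun h => h.symm))⟩
      have h2 : Sum.inr v = a1 := huniq _ ⟨hvA, (split_adj_lr G j v).mpr hadj⟩
      exact Sum.inr_injective (h1.trans h2.symm)
    · exact absurd hadj (split_adj_rr G v i)

/-- `G` has an irredundant set of size `k` iff the split graph `G'` of the reduction has a
pair of perfectly matched sets of size `k`. -/
theorem irredundant_iff_pms_split {V : Type*} [Fintype V] [DecidableEq V]
    (G : SimpleGraph V) (k : ℕ) :
    (∃ I : Finset V, I.card = k ∧ Irredundant G I) ↔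
    (∃ A B : Finset (V ⊕ V), IsPMS (splitReduction G) A B ∧ A.card = k ∧ B.card = k) := by
  constructor
  · rintro ⟨I, hcard, hirr⟩
    have hch : ∀ v, ∃ p, v ∈ I →
        (p = v ∨ G.Adj v p) ∧ ∀ u ∈ I, (u = p ∨ G.Adj u p) → u = v := by
      intro v
      by_cases hv : v ∈ I
      · obtain ⟨p, h1, h2⟩ := hirr v hv
        exact ⟨p, fun _ => ⟨h1, h2⟩⟩
      · exact ⟨v, fun h => absurd h hv⟩
    choose p hp using hch
    have pinj : ∀ u ∈ I, ∀ v ∈ I, p u = p v → u = v := by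
      intro u hu v hv he
      refine (hp v hv).2 u hu ?_
      rw [← he]
      exact ((hp u hu).1).imp (fun h => h.symm) (fun h => h)
    refine ⟨I.image (fun v => Sum.inl (p v)), I.image Sum.inr, ⟨?_, ?_, ?_⟩, ?_, ?_⟩
    · rw [Finset.disjoint_left]
      rintro a ha hb
      obtain ⟨v, _, rfl⟩ := Finset.mem_image.mp ha
      obtain ⟨u, _, h⟩ := Finset.mem_image.mp hb
      simp at h
    · rintro a ha
      obtain ⟨v, hv, rfl⟩ := Finset.mem_image.mp ha
      refine ⟨Sum.inr v, ⟨Finset.mem_image_of_mem _ hv, (split_adj_lr G _ v).mpr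
        ((hp v hv).1.imp (fun h => h) (fun h => h.symm))⟩, ?_⟩
      rintro b ⟨hbB, hadj⟩
      obtain ⟨u, hu, rfl⟩ := Finset.mem_image.mp hbB
      rw [split_adj_lr] at hadj
      have := (hp v hv).2 u hu (hadj.imp (fun h => h.symm) (fun h => h.symm))
      rw [this]
    · rintro b hb
      obtain ⟨v, hv, rfl⟩ := Finset.mem_image.mp hb
      refine ⟨Sum.inl (p v), ⟨Finset.mem_image_of_mem _ hv, (split_adj_rl G v _).mpr
        ((hp v hv).1.imp (fun h => h) (fun h => h.symm))⟩, ?_⟩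
      rintro a ⟨haA, hadj⟩
      obtain ⟨u, hu, rfl⟩ := Finset.mem_image.mp haA
      rw [split_adj_rl] at hadj
      have := (hp u hu).2 v hv (hadj.imp (fun h => h.symm) (fun h => h.symm))
      rw [← this]
    · rw [Finset.card_image_of_injOn, hcard]
      intro u hu v hv he
      exact pinj u hu v hv (by simpa using he)
    · rw [Finset.card_image_of_injective _ Sum.inr_injective, hcard]
  · rintro ⟨A, B, hpms, hAcard, hBcard⟩
    by_cases hAr : ∀ a ∈ A, ∃ v, a = Sum.inr v
    · obtain ⟨I, hI, hirr⟩ := extract_irredundant G A B hpms hAr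
      exact ⟨I, hI.trans hAcard, hirr⟩
    by_cases hBr : ∀ b ∈ B, ∃ v, b = Sum.inr v
    · obtain ⟨I, hI, hirr⟩ := extract_irredundant G B A hpms.symm hBr
      exact ⟨I, hI.trans hBcard, hirr⟩
    · push_neg at hAr hBr
      obtain ⟨a0, ha0, ha0r⟩ := hAr
      obtain ⟨b0, hb0, hb0r⟩ := hBr
      obtain (⟨j0⟩ | ⟨v0⟩) := a0
      swap
      · exact absurd rfl (ha0r v0)
      obtain (⟨i0⟩ | ⟨u0⟩) := b0
      swap
      · exact absurd rfl (hb0r u0)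
      clear ha0r hb0r
      have hdisj := hpms.1
      have hne : ∀ x ∈ A, ∀ y ∈ B, x ≠ y := by
        intro x hx y hy hxy
        exact (Finset.disjoint_left.mp hdisj hx) (hxy ▸ hy)
      -- every element of B that is inl equals inl i0
      have hBinl : ∀ i, Sum.inl i ∈ B → (Sum.inl i : V ⊕ V) = Sum.inl i0 := by
        intro i hi
        obtain ⟨b1, _, huniq⟩ := hpms.2.1 (Sum.inl j0) ha0
        have h1 : (Sum.inl i : V ⊕ V) = b1 := huniq _ ⟨hi, (split_adj_ll G j0 i).mpr
          (fun h => hne _ ha0 _ hi (by rw [h]))⟩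
        have h2 : (Sum.inl i0 : V ⊕ V) = b1 := huniq _ ⟨hb0, (split_adj_ll G j0 i0).mpr
          (fun h => hne _ ha0 _ hb0 (by rw [h]))⟩
        rw [h1, h2]
      -- every element of A equals inl j0
      have hAall : ∀ a ∈ A, a = Sum.inl j0 := by
        intro a ha
        obtain ⟨a1, _, huniq⟩ := hpms.2.2 (Sum.inl i0) hb0
        have hj0 : (Sum.inl j0 : V ⊕ V) = a1 := huniq _ ⟨ha0, (split_adj_ll G i0 j0).mpr
          (fun h => hne _ ha0 _ hb0 (by rw [h]))⟩
        obtain (⟨j⟩ | ⟨v⟩) := a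
        · have : (Sum.inl j : V ⊕ V) = a1 := huniq _ ⟨ha, (split_adj_ll G i0 j).mpr
            (fun h => hne _ ha _ hb0 (by rw [h]))⟩
          rw [this, hj0]
        · -- inr v ∈ A: its unique B-neighbor must be inl, hence inl i0
          obtain ⟨b, ⟨hbB, hadj⟩, _⟩ := hpms.2.1 (Sum.inr v) ha
          obtain (⟨i⟩ | ⟨w⟩) := b
          · have hii0 := hBinl i hbB
            rw [hii0] at hadj
            have : (Sum.inr v : V ⊕ V) = a1 := huniq _ ⟨ha, hadj.symm⟩
            exact absurd (this.trans hj0.symm) (by simp)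
          · exact absurd hadj (split_adj_rr G v w)
      have hA1 : A = {Sum.inl j0} := by
        apply Finset.eq_singleton_iff_unique_mem.mpr
        exact ⟨ha0, hAall⟩
      have hk : k = 1 := by rw [← hAcard, hA1, Finset.card_singleton]
      refine ⟨{j0}, by rw [hk, Finset.card_singleton], ?_⟩
      intro v hv
      refine ⟨j0, Or.inl (Finset.mem_singleton.mp hv).symm, ?_⟩
      intro u hu _
      rw [Finset.mem_singleton.mp hu, Finset.mem_singleton.mp hv]
end

section
/- Let f be a feasible solution for PMS in a graph G with cluster deletion set X, i.e., (f⁻¹(a), f⁻¹(b)) is a pair of perfectly matched sets with f : V(G) → {a,b,d}, and let C be a maximal clique of G − X. Then exactly one of the following holds: (1) C ∩ f⁻¹(a) ≠ ∅ and C ∩ f⁻¹(b) = ∅; (2) C ∩ f⁻¹(a) = ∅ and C ∩ f⁻¹(b) ≠ ∅; (3) there are two distinct vertices u,v ∈ C with C ∩ f⁻¹(a) = {u} and C ∩ f⁻¹(b) = {v}; (4) C ∩ f⁻¹(a) = ∅ and C ∩ f⁻¹(b) = ∅. -/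
/-- Let `f : V → Fin 3` encode an assignment with values `a = 0`, `b = 1`, `d = 2` which is
a feasible solution (i.e. `(f⁻¹(a), f⁻¹(b))` is a pair of perfectly matched sets), let `X`
be a cluster deletion set (so `G − X` is `P₃`-free, a disjoint union of cliques), and let
`C` be a maximal clique of `G − X`.  Then `C` is of exactly one of the four types:
(1) `C ∩ f⁻¹(a) ≠ ∅` and `C ∩ f⁻¹(b) = ∅`; (2) `C ∩ f⁻¹(a) = ∅` and `C ∩ f⁻¹(b) ≠ ∅`;
(3) `C ∩ f⁻¹(a) = {u}` and `C ∩ f⁻¹(b) = {v}` for distinct `u, v ∈ C`;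
(4) both intersections are empty. -/
theorem pms_cluster_clique_types {V : Type*} [Fintype V] [DecidableEq V]
    (G : SimpleGraph V) (X C : Finset V) (f : V → Fin 3)
    (hfeasible : IsPMS G (Finset.univ.filter (fun v => f v = 0))
      (Finset.univ.filter (fun v => f v = 1)))
    (hcluster : ∀ u v w : V, u ∉ X → v ∉ X → w ∉ X →
      G.Adj u v → G.Adj v w → u ≠ w → G.Adj u w)
    (hCX : ∀ v ∈ C, v ∉ X)
    (hclique : ∀ u ∈ C, ∀ v ∈ C, u ≠ v → G.Adj u v)
    (hmax : ∀ v : V, v ∉ X → (∀ u ∈ C, u ≠ v → G.Adj u v) → v ∈ C) :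
    ((C.filter (fun v => f v = 0)).Nonempty ∧ C.filter (fun v => f v = 1) = ∅) ∨
    (C.filter (fun v => f v = 0) = ∅ ∧ (C.filter (fun v => f v = 1)).Nonempty) ∨
    (∃ u v, u ≠ v ∧ C.filter (fun w => f w = 0) = {u} ∧ C.filter (fun w => f w = 1) = {v}) ∨
    (C.filter (fun v => f v = 0) = ∅ ∧ C.filter (fun v => f v = 1) = ∅) := by
  by_cases hA : (C.filter (fun v => f v = 0)).Nonempty
  · by_cases hB : (C.filter (fun v => f v = 1)).Nonempty
    · obtain ⟨u, hu⟩ := hA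
      obtain ⟨v, hv⟩ := hB
      rw [Finset.mem_filter] at hu hv
      have huv : u ≠ v := by
        intro h; rw [h, hv.2] at hu; exact absurd hu.2 (by decide)
      have hadj : G.Adj u v := hclique u hu.1 v hv.1 huv
      refine Or.inr (Or.inr (Or.inl ⟨u, v, huv, ?_, ?_⟩))
      · ext w
        simp only [Finset.mem_filter, Finset.mem_singleton]
        constructor
        · rintro ⟨hwC, hw0⟩
          have hwv : w ≠ v := by
            intro h; rw [h, hv.2] at hw0; exact absurd hw0 (by decide)
          have hadjw : G.Adj v w := (hclique w hwC v hv.1 hwv).symm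
          obtain ⟨a, _, hauniq⟩ := hfeasible.2.2 v (by simp [hv.2])
          have h1 := hauniq w ⟨by simp [hw0], hadjw⟩
          have h2 := hauniq u ⟨by simp [hu.2], hadj.symm⟩
          rw [h1, h2]
        · rintro rfl; exact ⟨hu.1, hu.2⟩
      · ext w
        simp only [Finset.mem_filter, Finset.mem_singleton]
        constructor
        · rintro ⟨hwC, hw1⟩
          have hwu : w ≠ u := by
            intro h; rw [h, hu.2] at hw1; exact absurd hw1 (by decide)
          have hadjw : G.Adj u w := hclique u hu.1 w hwC hwu.symm
          obtain ⟨b, _, hbuniq⟩ := hfeasible.2.1 u (by simp [hu.2])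
          have h1 := hbuniq w ⟨by simp [hw1], hadjw⟩
          have h2 := hbuniq v ⟨by simp [hv.2], hadj⟩
          rw [h1, h2]
        · rintro rfl; exact ⟨hv.1, hv.2⟩
    · exact Or.inl ⟨hA, Finset.not_nonempty_iff_eq_empty.mp hB⟩
  · by_cases hB : (C.filter (fun v => f v = 1)).Nonempty
    · exact Or.inr (Or.inl ⟨Finset.not_nonempty_iff_eq_empty.mp hA, hB⟩)
    · exact Or.inr (Or.inr (Or.inr ⟨Finset.not_nonempty_iff_eq_empty.mp hA,
        Finset.not_nonempty_iff_eq_empty.mp hB⟩))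
end

section
/- Let G be a graph with vertex set {v_1,...,v_n} and let G' be the planar-preserving gadget graph built as follows: V(G') = V' ∪ V'' ∪ X_e, where V' = {v'_i}, V'' = {v''_i} with v'_i adjacent to v''_i (v''_i has degree 1), v'_i adjacent to v'_j iff v_i v_j ∈ E(G), and for each edge v_i v_j ∈ E(G) with i < j a path e¹_{ij} e²_{ij} e³_{ij} e⁴_{ij}, with v'_i adjacent to e¹_{ij} and e⁴_{ij}, and v'_j adjacent to e²_{ij} and e³_{ij}. Then G has an independent set of size k if and only if G' has a pair of perfectly matched sets of size k + 2·|E(G)|. -/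
/-- Vertex set of the planar gadget graph `G'`: a copy `V'` of `V(G)` (first summand),
pendant copies `V''` (second summand), and for every edge `v_i v_j` with `i < j` a path on
four vertices `e¹_{ij}, e²_{ij}, e³_{ij}, e⁴_{ij}` (third summand). -/
abbrev GadgetVert {V : Type*} [LinearOrder V] (G : SimpleGraph V) :=
  V ⊕ V ⊕ ({p : V × V // p.1 < p.2 ∧ G.Adj p.1 p.2} × Fin 4)

/-- The planar gadget graph `G'`: `v'_i ∼ v'_j` iff `v_i v_j ∈ E(G)`; `v''_i` is a pendant
neighbor of `v'_i`; for each edge `v_i v_j` with `i < j`, the four gadget vertices form a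
path `e¹-e²-e³-e⁴` with `v'_i` adjacent to `e¹, e⁴` and `v'_j` adjacent to `e², e³`. -/
def gadgetGraph {V : Type*} [LinearOrder V] (G : SimpleGraph V) :
    SimpleGraph (GadgetVert G) :=
  SimpleGraph.fromRel (fun x y =>
    match x, y with
    | Sum.inl i, Sum.inl j => G.Adj i j
    | Sum.inl i, Sum.inr (Sum.inl j) => i = j
    | Sum.inl i, Sum.inr (Sum.inr (e, k)) =>
        (i = e.val.1 ∧ (k = 0 ∨ k = 3)) ∨ (i = e.val.2 ∧ (k = 1 ∨ k = 2))
    | Sum.inr (Sum.inr (e, k)), Sum.inr (Sum.inr (e', k')) =>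
        e = e' ∧ (k' : ℕ) = (k : ℕ) + 1
    | _, _ => False)

set_option linter.unusedSectionVars false

namespace PMSGadget

variable {V : Type*} [LinearOrder V] {G : SimpleGraph V}

abbrev EType (G : SimpleGraph V) := {p : V × V // p.1 < p.2 ∧ G.Adj p.1 p.2}

/-- gadget vertex -/
def gv (e : EType G) (m : Fin 4) : GadgetVert G := Sum.inr (Sum.inr (e, m))

/-- pendant vertex -/
def pv (i : V) : GadgetVert G := Sum.inr (Sum.inl i)

lemma gv_inj : ∀ {e e' : EType G} {m m'}, gv e m = gv e' m' → e = e' ∧ m = m' := by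
  intro e e' m m' h
  simp only [gv, Sum.inr.injEq, Prod.mk.injEq] at h
  exact h

lemma adj_inl_inl {i j : V} : (gadgetGraph G).Adj (Sum.inl i) (Sum.inl j) ↔ G.Adj i j := by
  simp [gadgetGraph, SimpleGraph.fromRel_adj]
  constructor
  · rintro ⟨h, h2 | h2⟩ <;> [exact h2; exact h2.symm]
  · exact fun h => ⟨by rintro rfl; exact G.irrefl h, Or.inl h⟩

lemma adj_inl_pend {i j : V} : (gadgetGraph G).Adj (Sum.inl i) (pv j) ↔ i = j := by
  simp [gadgetGraph, pv, SimpleGraph.fromRel_adj]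

lemma adj_inl_gad {i : V} {e : EType G} {m : Fin 4} :
    (gadgetGraph G).Adj (Sum.inl i) (gv e m) ↔
      (i = e.val.1 ∧ (m = 0 ∨ m = 3)) ∨ (i = e.val.2 ∧ (m = 1 ∨ m = 2)) := by
  simp [gadgetGraph, gv, SimpleGraph.fromRel_adj]

lemma adj_gad_gad {e e' : EType G} {m m' : Fin 4} :
    (gadgetGraph G).Adj (gv e m) (gv e' m') ↔
      e = e' ∧ ((m' : ℕ) = (m : ℕ) + 1 ∨ (m : ℕ) = (m' : ℕ) + 1) := by
  simp [gadgetGraph, gv, SimpleGraph.fromRel_adj]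
  constructor
  · rintro ⟨h, ⟨rfl, h2⟩ | ⟨rfl, h2⟩⟩
    · exact ⟨rfl, Or.inl h2⟩
    · exact ⟨rfl, Or.inr h2⟩
  · rintro ⟨rfl, h2 | h2⟩
    · exact ⟨by simp; omega, Or.inl ⟨rfl, h2⟩⟩
    · exact ⟨by simp; omega, Or.inr ⟨rfl, h2⟩⟩

lemma adj_pend_pend {i j : V} : ¬ (gadgetGraph G).Adj (pv i) (pv j : GadgetVert G) := by
  simp [gadgetGraph, pv, SimpleGraph.fromRel_adj]

lemma adj_pend_gad {i : V} {e : EType G} {m : Fin 4} :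
    ¬ (gadgetGraph G).Adj (pv i) (gv e m) := by
  simp [gadgetGraph, pv, gv, SimpleGraph.fromRel_adj]

/-- the only neighbor of a pendant vertex is its copy vertex -/
lemma pend_adj {i : V} {x : GadgetVert G} (h : (gadgetGraph G).Adj (pv i) x) : x = Sum.inl i := by
  rcases x with j | j | ⟨e, m⟩
  · rw [show (Sum.inl j : GadgetVert G) = Sum.inl j from rfl] at h
    have := (adj_inl_pend.mp h.symm)
    rw [this]
  · exact absurd h adj_pend_pend
  · exact absurd h adj_pend_gad

lemma card_EType [Fintype V] [DecidableRel G.Adj] :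
    Fintype.card (EType G) = G.edgeFinset.card := by
  classical
  rw [← Fintype.card_coe G.edgeFinset]
  apply Fintype.card_of_bijective (f := fun e : EType G =>
    (⟨s(e.val.1, e.val.2), by
      rw [SimpleGraph.mem_edgeFinset, SimpleGraph.mem_edgeSet]; exact e.prop.2⟩ : G.edgeFinset))
  constructor
  · rintro ⟨⟨a, b⟩, hab⟩ ⟨⟨c, d⟩, hcd⟩ h
    simp only [Subtype.mk.injEq, Sym2.eq_iff] at h
    rcases h with ⟨rfl, rfl⟩ | ⟨rfl, rfl⟩
    · rfl
    · exact absurd hcd.1 (by simp; exact le_of_lt hab.1)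
  · rintro ⟨s, hs⟩
    induction s using Sym2.ind with
    | _ a b =>
      rw [SimpleGraph.mem_edgeFinset, SimpleGraph.mem_edgeSet] at hs
      rcases lt_or_gt_of_ne hs.ne with h | h
      · exact ⟨⟨(a, b), h, hs⟩, rfl⟩
      · exact ⟨⟨(b, a), h, hs.symm⟩, Subtype.ext Sym2.eq_swap⟩


variable [Fintype V] [DecidableRel G.Adj]

lemma forward (I : Finset V) (hind : ∀ u ∈ I, ∀ v ∈ I, ¬ G.Adj u v) :
    ∃ A B : Finset (GadgetVert G), IsPMS (gadgetGraph G) A B ∧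
      A.card = I.card + 2 * G.edgeFinset.card ∧
      B.card = I.card + 2 * G.edgeFinset.card := by
  classical
  set f1 : EType G → GadgetVert G := fun e => gv e (if e.val.2 ∈ I then 1 else 0) with hf1
  set f2 : EType G → GadgetVert G := fun e => gv e (if e.val.2 ∈ I then 2 else 3) with hf2
  set g1 : EType G → GadgetVert G := fun e => gv e (if e.val.2 ∈ I then 0 else 1) with hg1
  set g2 : EType G → GadgetVert G := fun e => gv e (if e.val.2 ∈ I then 3 else 2) with hg2
  set A := I.image Sum.inl ∪ Finset.univ.image f1 ∪ Finset.univ.image f2 with hA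
  set B := I.image pv ∪ Finset.univ.image g1 ∪ Finset.univ.image g2 with hB
  -- adjacency facts
  have hadj11 : ∀ e : EType G, (gadgetGraph G).Adj (f1 e) (g1 e) := by
    intro e
    by_cases hc : e.val.2 ∈ I <;>
      simp only [hf1, hg1, hc, if_true, if_false, adj_gad_gad] <;> exact ⟨trivial, by decide⟩
  have hadj22 : ∀ e : EType G, (gadgetGraph G).Adj (f2 e) (g2 e) := by
    intro e
    by_cases hc : e.val.2 ∈ I <;>
      simp only [hf2, hg2, hc, if_true, if_false, adj_gad_gad] <;> exact ⟨trivial, by decide⟩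
  have h11 : ∀ e e' : EType G, (gadgetGraph G).Adj (f1 e) (g1 e') → e' = e := by
    intro e e' h
    rcases (adj_gad_gad.mp h) with ⟨rfl, _⟩; rfl
  have h22 : ∀ e e' : EType G, (gadgetGraph G).Adj (f2 e) (g2 e') → e' = e := by
    intro e e' h
    rcases (adj_gad_gad.mp h) with ⟨rfl, _⟩; rfl
  have h12 : ∀ e e' : EType G, ¬ (gadgetGraph G).Adj (f1 e) (g2 e') := by
    intro e e' h
    rcases (adj_gad_gad.mp h) with ⟨rfl, hm⟩
    by_cases hc : e.val.2 ∈ I <;>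
      simp only [hf1, hg2, hc, if_true, if_false] at hm <;> revert hm <;> decide
  have h21 : ∀ e e' : EType G, ¬ (gadgetGraph G).Adj (f2 e) (g1 e') := by
    intro e e' h
    rcases (adj_gad_gad.mp h) with ⟨rfl, hm⟩
    by_cases hc : e.val.2 ∈ I <;>
      simp only [hf2, hg1, hc, if_true, if_false] at hm <;> revert hm <;> decide
  have hig1 : ∀ i ∈ I, ∀ e : EType G, ¬ (gadgetGraph G).Adj (Sum.inl i) (g1 e) := by
    intro i hi e h
    by_cases hc : e.val.2 ∈ I <;> simp [hg1, hc, adj_inl_gad] at h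
    · rw [h] at hi; exact hind _ hi _ hc e.prop.2
    · rw [h] at hi; exact hc hi
  have hig2 : ∀ i ∈ I, ∀ e : EType G, ¬ (gadgetGraph G).Adj (Sum.inl i) (g2 e) := by
    intro i hi e h
    by_cases hc : e.val.2 ∈ I <;> simp [hg2, hc, adj_inl_gad] at h
    · rw [h] at hi; exact hind _ hi _ hc e.prop.2
    · rw [h] at hi; exact hc hi
  -- membership
  have hAmem : ∀ x, x ∈ A ↔ (∃ i ∈ I, Sum.inl i = x) ∨ (∃ e, f1 e = x) ∨ (∃ e, f2 e = x) := by
    intro x; simp [hA, Finset.mem_union, Finset.mem_image, or_assoc]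
  have hBmem : ∀ x, x ∈ B ↔ (∃ i ∈ I, pv i = x) ∨ (∃ e, g1 e = x) ∨ (∃ e, g2 e = x) := by
    intro x; simp [hB, Finset.mem_union, Finset.mem_image, or_assoc]
  have hpvA : ∀ i ∈ I, Sum.inl i ∈ A := fun i hi => (hAmem _).2 (Or.inl ⟨i, hi, rfl⟩)
  have hf1A : ∀ e, f1 e ∈ A := fun e => (hAmem _).2 (Or.inr (Or.inl ⟨e, rfl⟩))
  have hf2A : ∀ e, f2 e ∈ A := fun e => (hAmem _).2 (Or.inr (Or.inr ⟨e, rfl⟩))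
  have hpvB : ∀ i ∈ I, pv i ∈ B := fun i hi => (hBmem _).2 (Or.inl ⟨i, hi, rfl⟩)
  have hg1B : ∀ e, g1 e ∈ B := fun e => (hBmem _).2 (Or.inr (Or.inl ⟨e, rfl⟩))
  have hg2B : ∀ e, g2 e ∈ B := fun e => (hBmem _).2 (Or.inr (Or.inr ⟨e, rfl⟩))
  refine ⟨A, B, ⟨?_, ?_, ?_⟩, ?_, ?_⟩
  · -- disjoint
    rw [Finset.disjoint_left]
    intro x hxA hxB
    rcases (hAmem x).1 hxA with ⟨i, hi, rfl⟩ | ⟨e, rfl⟩ | ⟨e, rfl⟩ <;>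
      rcases (hBmem _).1 hxB with ⟨j, hj, h⟩ | ⟨e', h⟩ | ⟨e', h⟩
    · exact absurd h (by simp [pv])
    · exact absurd h (by simp [hg1, gv])
    · exact absurd h (by simp [hg2, gv])
    · exact absurd h (by simp [hf1, pv, gv])
    · obtain ⟨he, hm⟩ := gv_inj h
      subst he
      by_cases hc : e'.val.2 ∈ I <;> simp only [hc, if_true, if_false] at hm <;>
        exact absurd hm (by decide)
    · obtain ⟨he, hm⟩ := gv_inj h
      subst he
      by_cases hc : e'.val.2 ∈ I <;> simp only [hc, if_true, if_false] at hm <;>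
        exact absurd hm (by decide)
    · exact absurd h (by simp [hf2, pv, gv])
    · obtain ⟨he, hm⟩ := gv_inj h
      subst he
      by_cases hc : e'.val.2 ∈ I <;> simp only [hc, if_true, if_false] at hm <;>
        exact absurd hm (by decide)
    · obtain ⟨he, hm⟩ := gv_inj h
      subst he
      by_cases hc : e'.val.2 ∈ I <;> simp only [hc, if_true, if_false] at hm <;>
        exact absurd hm (by decide)
  · -- A side
    intro a ha
    rcases (hAmem a).1 ha with ⟨i, hi, rfl⟩ | ⟨e, rfl⟩ | ⟨e, rfl⟩
    · refine ⟨pv i, ⟨hpvB i hi, adj_inl_pend.mpr rfl⟩, ?_⟩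
      rintro c ⟨hcB, hadj⟩
      rcases (hBmem c).1 hcB with ⟨j, hj, rfl⟩ | ⟨e, rfl⟩ | ⟨e, rfl⟩
      · obtain rfl := adj_inl_pend.mp hadj; rfl
      · exact absurd hadj (hig1 i hi e)
      · exact absurd hadj (hig2 i hi e)
    · refine ⟨g1 e, ⟨hg1B e, hadj11 e⟩, ?_⟩
      rintro c ⟨hcB, hadj⟩
      rcases (hBmem c).1 hcB with ⟨j, hj, rfl⟩ | ⟨e', rfl⟩ | ⟨e', rfl⟩
      · exact absurd hadj.symm (by simp [hf1]; exact adj_pend_gad)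
      · rw [h11 e e' hadj]
      · exact absurd hadj (h12 e e')
    · refine ⟨g2 e, ⟨hg2B e, hadj22 e⟩, ?_⟩
      rintro c ⟨hcB, hadj⟩
      rcases (hBmem c).1 hcB with ⟨j, hj, rfl⟩ | ⟨e', rfl⟩ | ⟨e', rfl⟩
      · exact absurd hadj.symm (by simp [hf2]; exact adj_pend_gad)
      · exact absurd hadj (h21 e e')
      · rw [h22 e e' hadj]
  · -- B side
    intro b hb
    rcases (hBmem b).1 hb with ⟨i, hi, rfl⟩ | ⟨e, rfl⟩ | ⟨e, rfl⟩
    · refine ⟨Sum.inl i, ⟨hpvA i hi, (adj_inl_pend.mpr rfl).symm⟩, ?_⟩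
      rintro c ⟨hcA, hadj⟩
      rcases (hAmem c).1 hcA with ⟨j, hj, rfl⟩ | ⟨e, rfl⟩ | ⟨e, rfl⟩
      · obtain rfl := adj_inl_pend.mp hadj.symm; rfl
      · exact absurd hadj (by simp [hf1]; exact adj_pend_gad)
      · exact absurd hadj (by simp [hf2]; exact adj_pend_gad)
    · refine ⟨f1 e, ⟨hf1A e, (hadj11 e).symm⟩, ?_⟩
      rintro c ⟨hcA, hadj⟩
      rcases (hAmem c).1 hcA with ⟨j, hj, rfl⟩ | ⟨e', rfl⟩ | ⟨e', rfl⟩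
      · exact absurd hadj.symm (hig1 j hj e)
      · rw [h11 e' e hadj.symm]
      · exact absurd hadj.symm (h21 e' e)
    · refine ⟨f2 e, ⟨hf2A e, (hadj22 e).symm⟩, ?_⟩
      rintro c ⟨hcA, hadj⟩
      rcases (hAmem c).1 hcA with ⟨j, hj, rfl⟩ | ⟨e', rfl⟩ | ⟨e', rfl⟩
      · exact absurd hadj.symm (hig2 j hj e)
      · exact absurd hadj.symm (h12 e' e)
      · rw [h22 e' e hadj.symm]
  · -- card A
    have hf1inj : Function.Injective f1 := fun a b h => (gv_inj h).1
    have hf2inj : Function.Injective f2 := fun a b h => (gv_inj h).1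
    have hd1 : Disjoint (I.image Sum.inl) (Finset.univ.image f1) := by
      rw [Finset.disjoint_left]
      rintro x hx1 hx2
      rw [Finset.mem_image] at hx1 hx2
      obtain ⟨i, _, rfl⟩ := hx1
      obtain ⟨e, _, h⟩ := hx2
      exact absurd h (by simp [hf1, gv])
    have hd2 : Disjoint (I.image Sum.inl ∪ Finset.univ.image f1) (Finset.univ.image f2) := by
      rw [Finset.disjoint_left]
      rintro x hx1 hx2
      rw [Finset.mem_union] at hx1
      rw [Finset.mem_image] at hx2
      obtain ⟨e, _, rfl⟩ := hx2
      rcases hx1 with hx1 | hx1 <;> rw [Finset.mem_image] at hx1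
      · obtain ⟨i, _, h⟩ := hx1
        exact absurd h (by simp [hf2, gv])
      · obtain ⟨e', _, h⟩ := hx1
        obtain ⟨he, hm⟩ := gv_inj h
        rw [he] at hm
        by_cases hc : e.val.2 ∈ I <;> simp only [hc, if_true, if_false] at hm <;>
          exact absurd hm (by decide)
    rw [hA, Finset.card_union_of_disjoint hd2, Finset.card_union_of_disjoint hd1,
      Finset.card_image_of_injective _ Sum.inl_injective,
      Finset.card_image_of_injective _ hf1inj, Finset.card_image_of_injective _ hf2inj,
      Finset.card_univ, card_EType]
    ring
  · -- card B
    have hg1inj : Function.Injective g1 := fun a b h => (gv_inj h).1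
    have hg2inj : Function.Injective g2 := fun a b h => (gv_inj h).1
    have hpvinj : Function.Injective (pv : V → GadgetVert G) := fun a b h => by
      simpa [pv] using h
    have hd1 : Disjoint (I.image pv) (Finset.univ.image g1) := by
      rw [Finset.disjoint_left]
      rintro x hx1 hx2
      rw [Finset.mem_image] at hx1 hx2
      obtain ⟨i, _, rfl⟩ := hx1
      obtain ⟨e, _, h⟩ := hx2
      exact absurd h (by simp [hg1, gv, pv])
    have hd2 : Disjoint (I.image pv ∪ Finset.univ.image g1) (Finset.univ.image g2) := by
      rw [Finset.disjoint_left]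
      rintro x hx1 hx2
      rw [Finset.mem_union] at hx1
      rw [Finset.mem_image] at hx2
      obtain ⟨e, _, rfl⟩ := hx2
      rcases hx1 with hx1 | hx1 <;> rw [Finset.mem_image] at hx1
      · obtain ⟨i, _, h⟩ := hx1
        exact absurd h (by simp [hg2, gv, pv])
      · obtain ⟨e', _, h⟩ := hx1
        obtain ⟨he, hm⟩ := gv_inj h
        rw [he] at hm
        by_cases hc : e.val.2 ∈ I <;> simp only [hc, if_true, if_false] at hm <;>
          exact absurd hm (by decide)
    rw [hB, Finset.card_union_of_disjoint hd2, Finset.card_union_of_disjoint hd1,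
      Finset.card_image_of_injective _ hpvinj,
      Finset.card_image_of_injective _ hg1inj, Finset.card_image_of_injective _ hg2inj,
      Finset.card_univ, card_EType]
    ring


lemma pms_symm {A B : Finset (GadgetVert G)} (h : IsPMS (gadgetGraph G) A B) :
    IsPMS (gadgetGraph G) B A := ⟨h.1.symm, h.2.2, h.2.1⟩

variable (G) in
noncomputable def badSet (A B : Finset (GadgetVert G)) : Finset V :=
  @Finset.filter V (fun i =>
    (Sum.inl i ∈ A ∧ pv i ∉ B) ∨ (Sum.inl i ∈ B ∧ pv i ∉ A)) (Classical.decPred _)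
    Finset.univ

lemma mem_badSet {A B : Finset (GadgetVert G)} {i : V} :
    i ∈ badSet G A B ↔ (Sum.inl i ∈ A ∧ pv i ∉ B) ∨ (Sum.inl i ∈ B ∧ pv i ∉ A) := by
  simp only [badSet, Finset.mem_filter, Finset.mem_univ, true_and]

lemma badSet_comm (A B : Finset (GadgetVert G)) : badSet G A B = badSet G B A := by
  ext i
  rw [mem_badSet, mem_badSet]
  tauto

lemma swap_step {A B : Finset (GadgetVert G)} (h : IsPMS (gadgetGraph G) A B) {i : V}
    (hiA : Sum.inl i ∈ A) (hiB : pv i ∉ B) :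
    ∃ B', IsPMS (gadgetGraph G) A B' ∧ B'.card = B.card ∧
      badSet G A B' ⊆ (badSet G A B).erase i := by
  classical
  have hpvA : pv i ∉ A := by
    intro hp
    obtain ⟨b, ⟨hbB, hadj⟩, _⟩ := h.2.1 _ hp
    rw [pend_adj hadj] at hbB
    exact (Finset.disjoint_left.mp h.1 hiA) hbB
  obtain ⟨b, ⟨hbB, hadj⟩, huniq⟩ := h.2.1 _ hiA
  have hbne : b ≠ pv i := fun he => hiB (he ▸ hbB)
  have hbuniqA : ∀ a ∈ A, (gadgetGraph G).Adj b a → a = Sum.inl i := by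
    obtain ⟨a0, ha0, hu⟩ := h.2.2 b hbB
    intro a haA hab
    have h1 : a = a0 := hu a ⟨haA, hab⟩
    have h2 : Sum.inl i = a0 := hu _ ⟨hiA, hadj.symm⟩
    rw [h1, ← h2]
  refine ⟨insert (pv i) (B.erase b), ⟨?_, ?_, ?_⟩, ?_, ?_⟩
  · rw [Finset.disjoint_left]
    intro x hxA hxB'
    rcases Finset.mem_insert.mp hxB' with rfl | hx
    · exact hpvA hxA
    · exact (Finset.disjoint_left.mp h.1 hxA) (Finset.mem_of_mem_erase hx)
  · intro a haA
    by_cases hai : a = Sum.inl i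
    · subst hai
      refine ⟨pv i, ⟨Finset.mem_insert_self _ _, adj_inl_pend.mpr rfl⟩, ?_⟩
      rintro c ⟨hcB', hcadj⟩
      rcases Finset.mem_insert.mp hcB' with rfl | hc
      · rfl
      · exact absurd (huniq c ⟨Finset.mem_of_mem_erase hc, hcadj⟩)
          (Finset.ne_of_mem_erase hc)
    · obtain ⟨ba, ⟨hbaB, hbaadj⟩, hua⟩ := h.2.1 a haA
      have hba_ne : ba ≠ b := by
        rintro rfl
        exact hai (hbuniqA a haA hbaadj.symm)
      refine ⟨ba, ⟨Finset.mem_insert_of_mem (Finset.mem_erase.mpr ⟨hba_ne, hbaB⟩), hbaadj⟩, ?_⟩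
      rintro c ⟨hcB', hcadj⟩
      rcases Finset.mem_insert.mp hcB' with rfl | hc
      · exact absurd (pend_adj hcadj.symm) hai
      · exact hua c ⟨Finset.mem_of_mem_erase hc, hcadj⟩
  · intro b' hb'
    rcases Finset.mem_insert.mp hb' with rfl | hb'
    · refine ⟨Sum.inl i, ⟨hiA, (adj_inl_pend.mpr rfl).symm⟩, ?_⟩
      rintro c ⟨hcA, hcadj⟩
      exact pend_adj hcadj
    · exact h.2.2 b' (Finset.mem_of_mem_erase hb')
  · rw [Finset.card_insert_of_notMem (fun hx => hiB (Finset.mem_of_mem_erase hx)),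
      Finset.card_erase_of_mem hbB]
    have : 0 < B.card := Finset.card_pos.mpr ⟨b, hbB⟩
    omega
  · intro j hj
    rw [mem_badSet] at hj
    have hji : j ≠ i := by
      rintro rfl
      rcases hj with ⟨h1, h2⟩ | ⟨h1, h2⟩
      · exact h2 (Finset.mem_insert_self _ _)
      · rcases Finset.mem_insert.mp h1 with hh | hh
        · exact absurd hh (by simp [pv])
        · exact (Finset.disjoint_left.mp h.1 hiA) (Finset.mem_of_mem_erase hh)
    rw [Finset.mem_erase]
    refine ⟨hji, ?_⟩
    rw [mem_badSet]
    rcases hj with ⟨h1, h2⟩ | ⟨h1, h2⟩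
    · left
      refine ⟨h1, fun hpj => ?_⟩
      have hpjb : pv j ≠ b := by
        rintro rfl
        have hij : i = j := by simpa [adj_inl_pend] using hadj
        exact hji hij.symm
      exact h2 (Finset.mem_insert_of_mem (Finset.mem_erase.mpr ⟨hpjb, hpj⟩))
    · right
      rcases Finset.mem_insert.mp h1 with hh | hh
      · exact absurd hh (by simp [pv])
      · exact ⟨Finset.mem_of_mem_erase hh, h2⟩

lemma normalize : ∀ n (A B : Finset (GadgetVert G)), (badSet G A B).card ≤ n →
    IsPMS (gadgetGraph G) A B →
    ∃ A' B', IsPMS (gadgetGraph G) A' B' ∧ A'.card = A.card ∧ B'.card = B.card ∧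
      badSet G A' B' = ∅ := by
  intro n
  induction n with
  | zero =>
    intro A B hc h
    exact ⟨A, B, h, rfl, rfl, Finset.card_eq_zero.mp (Nat.le_zero.mp hc)⟩
  | succ n ih =>
    intro A B hc h
    by_cases hE : badSet G A B = ∅
    · exact ⟨A, B, h, rfl, rfl, hE⟩
    · obtain ⟨i, hi⟩ := Finset.nonempty_iff_ne_empty.mpr hE
      have hcard1 : 0 < (badSet G A B).card := Finset.card_pos.mpr ⟨i, hi⟩
      have herase : ((badSet G A B).erase i).card = (badSet G A B).card - 1 :=
        Finset.card_erase_of_mem hi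
      rw [mem_badSet] at hi
      rcases hi with ⟨h1, h2⟩ | ⟨h1, h2⟩
      · obtain ⟨B', hP, hcard, hsub⟩ := swap_step h h1 h2
        have hle : (badSet G A B').card ≤ n := by
          have := Finset.card_le_card hsub
          omega
        obtain ⟨A', B'', hP', hA', hB', hbad⟩ := ih A B' hle hP
        exact ⟨A', B'', hP', hA', by rw [hB', hcard], hbad⟩
      · obtain ⟨A'', hP, hcard, hsub⟩ := swap_step (pms_symm h) h1 h2
        have hle : (badSet G A'' B).card ≤ n := by
          have h3 := Finset.card_le_card hsub
          rw [badSet_comm B A''] at h3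
          rw [badSet_comm B A] at h3
          omega
        obtain ⟨A', B'', hP', hA', hB', hbad⟩ := ih A'' B hle (pms_symm hP)
        exact ⟨A', B'', hP', by rw [hA', hcard], hB', hbad⟩


lemma backward (k : ℕ) (A B : Finset (GadgetVert G)) (h : IsPMS (gadgetGraph G) A B)
    (hAc : A.card = k + 2 * G.edgeFinset.card) :
    ∃ I : Finset V, I.card = k ∧ ∀ u ∈ I, ∀ v ∈ I, ¬ G.Adj u v := by
  classical
  obtain ⟨A', B', h', hA'c, _, hbad⟩ := normalize (badSet G A B).card A B le_rfl h
  have hAc2 : A'.card = k + 2 * G.edgeFinset.card := hA'c.trans hAc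
  clear hAc hA'c h
  have hnorm : ∀ i : V, (Sum.inl i ∈ A' → pv i ∈ B') ∧ (Sum.inl i ∈ B' → pv i ∈ A') := by
    intro i
    have hi := Finset.eq_empty_iff_forall_notMem.mp hbad i
    rw [mem_badSet] at hi
    constructor
    · intro h1; by_contra h2; exact hi (Or.inl ⟨h1, h2⟩)
    · intro h1; by_contra h2; exact hi (Or.inr ⟨h1, h2⟩)
  set P : Finset V := Finset.univ.filter (fun i => Sum.inl i ∈ A') with hP
  set Q : Finset V := Finset.univ.filter (fun i => Sum.inl i ∈ B') with hQ
  set Ae : EType G → Finset (Fin 4) := fun e => Finset.univ.filter (fun m => gv e m ∈ A') with hAe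
  set Be : EType G → Finset (Fin 4) := fun e => Finset.univ.filter (fun m => gv e m ∈ B') with hBe
  have hpendA : ∀ i, pv i ∈ A' ↔ Sum.inl i ∈ B' := by
    intro i
    constructor
    · intro hp
      obtain ⟨b, ⟨hbB, hadj⟩, _⟩ := h'.2.1 _ hp
      rwa [← pend_adj hadj]
    · exact (hnorm i).2
  -- decomposition of A'
  have hgvinj : ∀ e : EType G, Function.Injective (gv e) := fun e m m' hm => (gv_inj hm).2
  have hdecomp : A' = P.image Sum.inl ∪ Q.image pv ∪
      Finset.univ.biUnion (fun e => (Ae e).image (gv e)) := by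
    ext x
    simp only [Finset.mem_union, Finset.mem_image, Finset.mem_biUnion, hP, hQ, hAe,
      Finset.mem_filter, Finset.mem_univ, true_and]
    constructor
    · intro hx
      rcases x with i | i | ⟨e, m⟩
      · exact Or.inl (Or.inl ⟨i, hx, rfl⟩)
      · exact Or.inl (Or.inr ⟨i, (hpendA i).1 hx, rfl⟩)
      · exact Or.inr ⟨e, m, hx, rfl⟩
    · rintro ((⟨i, hi, rfl⟩ | ⟨i, hi, rfl⟩) | ⟨e, m, hm, rfl⟩)
      · exact hi
      · exact (hnorm i).2 hi
      · exact hm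
  have hd1 : Disjoint (P.image (Sum.inl : V → GadgetVert G)) (Q.image pv) := by
    rw [Finset.disjoint_left]
    rintro x hx1 hx2
    rw [Finset.mem_image] at hx1 hx2
    obtain ⟨i, _, rfl⟩ := hx1
    obtain ⟨j, _, hj⟩ := hx2
    exact absurd hj (by simp [pv])
  have hd2 : Disjoint (P.image (Sum.inl : V → GadgetVert G) ∪ Q.image pv)
      (Finset.univ.biUnion (fun e => (Ae e).image (gv e))) := by
    rw [Finset.disjoint_left]
    rintro x hx1 hx2
    rw [Finset.mem_biUnion] at hx2
    obtain ⟨e, _, hx2⟩ := hx2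
    rw [Finset.mem_image] at hx2
    obtain ⟨m, _, rfl⟩ := hx2
    rw [Finset.mem_union] at hx1
    rcases hx1 with hx1 | hx1 <;> rw [Finset.mem_image] at hx1
    · obtain ⟨i, _, hi⟩ := hx1
      exact absurd hi (by simp [gv])
    · obtain ⟨i, _, hi⟩ := hx1
      exact absurd hi (by simp [pv, gv])
  have hcard_decomp : A'.card = P.card + Q.card + ∑ e : EType G, (Ae e).card := by
    rw [hdecomp, Finset.card_union_of_disjoint hd2, Finset.card_union_of_disjoint hd1,
      Finset.card_image_of_injective _ Sum.inl_injective,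
      Finset.card_image_of_injective _ (fun a b hab => by simpa [pv] using hab : Function.Injective (pv : V → GadgetVert G)),
      Finset.card_biUnion]
    · congr 1
      exact Finset.sum_congr rfl fun e _ => Finset.card_image_of_injective _ (hgvinj e)
    · intro e _ e' _ hee
      show Disjoint (Finset.image (gv e) (Ae e)) (Finset.image (gv e') (Ae e'))
      rw [Finset.disjoint_left]
      rintro x hx hx'
      rw [Finset.mem_image] at hx hx'
      obtain ⟨m, _, rfl⟩ := hx
      obtain ⟨m', _, h2⟩ := hx'
      exact hee (gv_inj h2).1.symm
  -- gadget vertices in A' have partners inside the same gadget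
  have hgadA : ∀ (e : EType G) (m : Fin 4), gv e m ∈ A' →
      ∃ m', gv e m' ∈ B' ∧ (gadgetGraph G).Adj (gv e m) (gv e m') := by
    intro e m hm
    obtain ⟨b, ⟨hbB, hadj⟩, _⟩ := h'.2.1 _ hm
    rcases b with v | v | ⟨e', m'⟩
    · exfalso
      have hpv : pv v ∈ A' := (hnorm v).2 hbB
      obtain ⟨a0, _, hu⟩ := h'.2.2 _ hbB
      have h1 := hu (pv v) ⟨hpv, (adj_inl_pend.mpr rfl)⟩
      have h2 := hu (gv e m) ⟨hm, hadj.symm⟩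
      rw [← h2] at h1
      exact absurd h1 (by simp [pv, gv])
    · exact absurd hadj (fun hh => adj_pend_gad hh.symm)
    · have he := (adj_gad_gad.mp hadj).1
      subst he
      exact ⟨m', hbB, hadj⟩
  have hAeBe : ∀ e, (Ae e).card ≤ (Be e).card := by
    intro e
    apply Finset.card_le_card_of_injOn
      (f := fun m => if hm : gv e m ∈ A' then (hgadA e m hm).choose else 0)
    · intro m hm
      simp only [Finset.mem_coe] at hm ⊢
      rw [hAe, Finset.mem_filter] at hm
      rw [hBe, Finset.mem_filter]
      rw [dif_pos hm.2]
      exact ⟨Finset.mem_univ _, ((hgadA e m hm.2).choose_spec).1⟩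
    · intro m1 hm1 m2 hm2 heq
      rw [Finset.mem_coe, hAe, Finset.mem_filter] at hm1 hm2
      have h1 := hm1.2
      have h2 := hm2.2
      simp only [dif_pos h1, dif_pos h2] at heq
      obtain ⟨hb1, hadj1⟩ := (hgadA e m1 h1).choose_spec
      obtain ⟨hb2, hadj2⟩ := (hgadA e m2 h2).choose_spec
      obtain ⟨a0, _, hu⟩ := h'.2.2 _ hb1
      have e1 := hu (gv e m1) ⟨h1, hadj1.symm⟩
      have e2 := hu (gv e m2) ⟨h2, by rw [heq] at hadj1 ⊢; exact hadj2.symm⟩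
      exact (gv_inj (e1.trans e2.symm)).2
  have hAele : ∀ e, (Ae e).card ≤ 2 := by
    intro e
    have hdisj : Disjoint (Ae e) (Be e) := by
      rw [Finset.disjoint_left]
      intro m hm hm'
      rw [hAe, Finset.mem_filter] at hm
      rw [hBe, Finset.mem_filter] at hm'
      exact (Finset.disjoint_left.mp h'.1 hm.2) hm'.2
    have h4 : (Ae e).card + (Be e).card ≤ 4 := by
      rw [← Finset.card_union_of_disjoint hdisj]
      simpa using Finset.card_le_univ (Ae e ∪ Be e)
    have := hAeBe e
    omega
  set I : Finset V := P ∪ Q with hI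
  have hImem : ∀ i, i ∈ I ↔ (Sum.inl i ∈ A' ∨ Sum.inl i ∈ B') := by
    intro i
    simp [hI, hP, hQ, Finset.mem_union, Finset.mem_filter]
  have hPQ : Disjoint P Q := by
    rw [Finset.disjoint_left]
    intro i hi hi'
    rw [hP, Finset.mem_filter] at hi
    rw [hQ, Finset.mem_filter] at hi'
    exact (Finset.disjoint_left.mp h'.1 hi.2) hi'.2
  -- bad edges contribute nothing
  have hbadzero : ∀ e : EType G, e.val.1 ∈ I → e.val.2 ∈ I → (Ae e).card = 0 := by
    intro e h1 h2
    rw [Finset.card_eq_zero]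
    have hadjij : G.Adj e.val.1 e.val.2 := e.prop.2
    have hadjany : ∀ m : Fin 4, (gadgetGraph G).Adj (Sum.inl e.val.1) (gv e m) ∨
        (gadgetGraph G).Adj (Sum.inl e.val.2) (gv e m) := by
      intro m
      fin_cases m
      · exact Or.inl (adj_inl_gad.mpr (Or.inl ⟨rfl, by decide⟩))
      · exact Or.inr (adj_inl_gad.mpr (Or.inr ⟨rfl, by decide⟩))
      · exact Or.inr (adj_inl_gad.mpr (Or.inr ⟨rfl, by decide⟩))
      · exact Or.inl (adj_inl_gad.mpr (Or.inl ⟨rfl, by decide⟩))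
    have key : ∀ i : V, Sum.inl i ∈ A' → ∀ c ∈ B', (gadgetGraph G).Adj (Sum.inl i) c → c = pv i := by
      intro i hi c hc hadj
      obtain ⟨b0, _, hu⟩ := h'.2.1 _ hi
      have x1 := hu (pv i) ⟨(hnorm i).1 hi, adj_inl_pend.mpr rfl⟩
      have x2 := hu c ⟨hc, hadj⟩
      exact x2.trans x1.symm
    have keyB : ∀ i : V, Sum.inl i ∈ B' → ∀ c ∈ A', (gadgetGraph G).Adj (Sum.inl i) c → c = pv i := by
      intro i hi c hc hadj
      obtain ⟨a0, _, hu⟩ := h'.2.2 _ hi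
      have x1 := hu (pv i) ⟨(hnorm i).2 hi, adj_inl_pend.mpr rfl⟩
      have x2 := hu c ⟨hc, hadj⟩
      exact x2.trans x1.symm
    have hmix1 : ¬(Sum.inl e.val.1 ∈ A' ∧ Sum.inl e.val.2 ∈ B') := by
      rintro ⟨ha, hb⟩
      have := key _ ha _ hb (adj_inl_inl.mpr hadjij)
      exact absurd this (by simp [pv])
    have hmix2 : ¬(Sum.inl e.val.1 ∈ B' ∧ Sum.inl e.val.2 ∈ A') := by
      rintro ⟨hb, ha⟩
      have := key _ ha _ hb (adj_inl_inl.mpr hadjij.symm)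
      exact absurd this (by simp [pv])
    rcases (hImem _).1 h1 with hA1 | hB1 <;> rcases (hImem _).1 h2 with hA2 | hB2
    · -- both in A'
      have hBeE : ∀ m : Fin 4, gv e m ∉ B' := by
        intro m hm
        rcases hadjany m with hx | hx
        · exact absurd (key _ hA1 _ hm hx) (by simp [gv, pv])
        · exact absurd (key _ hA2 _ hm hx) (by simp [gv, pv])
      rw [Finset.eq_empty_iff_forall_notMem]
      intro m hm
      rw [hAe, Finset.mem_filter] at hm
      obtain ⟨m', hm', _⟩ := hgadA e m hm.2
      exact hBeE m' hm'
    · exact absurd ⟨hA1, hB2⟩ hmix1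
    · exact absurd ⟨hB1, hA2⟩ hmix2
    · -- both in B'
      rw [Finset.eq_empty_iff_forall_notMem]
      intro m hm
      rw [hAe, Finset.mem_filter] at hm
      rcases hadjany m with hx | hx
      · exact absurd (keyB _ hB1 _ hm.2 hx) (by simp [gv, pv])
      · exact absurd (keyB _ hB2 _ hm.2 hx) (by simp [gv, pv])
  -- counting
  have hIcard : I.card = P.card + Q.card := Finset.card_union_of_disjoint hPQ
  set Bad : Finset (EType G) := Finset.univ.filter (fun e => e.val.1 ∈ I ∧ e.val.2 ∈ I) with hBad
  have hMuniv : (Finset.univ : Finset (EType G)).card = G.edgeFinset.card := by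
    rw [Finset.card_univ, card_EType]
  have hz : ∑ e ∈ Bad, (Ae e).card = 0 := Finset.sum_eq_zero (fun e he => by
    rw [hBad, Finset.mem_filter] at he
    exact hbadzero e he.2.1 he.2.2)
  have hsplit : ∑ e ∈ Finset.univ \ Bad, (Ae e).card + ∑ e ∈ Bad, (Ae e).card
      = ∑ e : EType G, (Ae e).card := Finset.sum_sdiff (Finset.subset_univ _)
  have hb : ∑ e ∈ Finset.univ \ Bad, (Ae e).card ≤ (Finset.univ \ Bad).card * 2 := by
    simpa [mul_comm] using Finset.sum_le_card_nsmul (Finset.univ \ Bad) _ 2 (fun x _ => hAele x)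
  have hsd : (Finset.univ \ Bad).card = G.edgeFinset.card - Bad.card := by
    rw [Finset.card_sdiff_of_subset (Finset.subset_univ _), hMuniv]
  have hBadM : Bad.card ≤ G.edgeFinset.card := by
    rw [← hMuniv]
    exact Finset.card_le_card (Finset.subset_univ _)
  have hIk : k + 2 * Bad.card ≤ I.card := by
    rw [hcard_decomp] at hAc2
    omega
  set J := I \ Bad.image (fun e => e.val.1) with hJ
  have hJcard : k ≤ J.card := by
    rw [hJ]
    have h1 := Finset.le_card_sdiff (Bad.image (fun e => e.val.1)) I
    have h2 := Finset.card_image_le (s := Bad) (f := fun e => e.val.1)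
    omega
  have hJind : ∀ u ∈ J, ∀ v ∈ J, ¬ G.Adj u v := by
    intro u hu v hv hadj
    rw [hJ, Finset.mem_sdiff] at hu hv
    rcases lt_trichotomy u v with hlt | rfl | hlt
    · have heBad : (⟨(u, v), hlt, hadj⟩ : EType G) ∈ Bad := by
        rw [hBad, Finset.mem_filter]
        exact ⟨Finset.mem_univ _, hu.1, hv.1⟩
      exact hu.2 (Finset.mem_image.mpr ⟨_, heBad, rfl⟩)
    · exact G.irrefl hadj
    · have heBad : (⟨(v, u), hlt, hadj.symm⟩ : EType G) ∈ Bad := by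
        rw [hBad, Finset.mem_filter]
        exact ⟨Finset.mem_univ _, hv.1, hu.1⟩
      exact hv.2 (Finset.mem_image.mpr ⟨_, heBad, rfl⟩)
  obtain ⟨I0, hsub, hcard0⟩ := Finset.exists_subset_card_eq hJcard
  exact ⟨I0, hcard0, fun u hu v hv => hJind u (hsub hu) v (hsub hv)⟩

end PMSGadget


/-- `G` has an independent set of size `k` iff the gadget graph `G'` has a pair of
perfectly matched sets of size `k + 2·|E(G)|`. -/
theorem independentSet_iff_pms_gadget {V : Type*} [Fintype V] [LinearOrder V]
    (G : SimpleGraph V) [DecidableRel G.Adj] (k : ℕ) :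
    (∃ I : Finset V, I.card = k ∧ ∀ u ∈ I, ∀ v ∈ I, ¬ G.Adj u v) ↔
    (∃ A B : Finset (GadgetVert G), IsPMS (gadgetGraph G) A B ∧
      A.card = k + 2 * G.edgeFinset.card ∧ B.card = k + 2 * G.edgeFinset.card) := by
  constructor
  · rintro ⟨I, rfl, hind⟩
    exact PMSGadget.forward I hind
  · rintro ⟨A, B, h, hA, hB⟩
    exact PMSGadget.backward k A B h hA
end

section
/- Let (A,B) be a pair of perfectly matched sets in a graph G and let v ∈ A have a pendant neighbor w (a vertex of degree 1 adjacent only to v) with w ∉ A ∪ B. If u ∈ B is the vertex matched to v, then (A, (B \ {u}) ∪ {w}) is also a pair of perfectly matched sets of the same size. -/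
/-- Pendant swap: if `(A,B)` is a pair of perfectly matched sets, `v ∈ A` has a pendant
neighbor `w` (with `N(w) = {v}`) outside `A ∪ B`, and `u ∈ B` is the vertex matched to `v`,
then `(A, (B \ {u}) ∪ {w})` is also a pair of perfectly matched sets of the same size. -/
theorem pms_pendant_swap {V : Type*} [DecidableEq V] (G : SimpleGraph V)
    (A B : Finset V) (v w u : V) (h : IsPMS G A B)
    (hv : v ∈ A) (hw : ∀ x, G.Adj w x ↔ x = v) (hwAB : w ∉ A ∪ B)
    (hu : u ∈ B) (hvu : G.Adj v u) :
    IsPMS G A (insert w (B.erase u)) ∧ (insert w (B.erase u)).card = B.card := by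
  obtain ⟨hdisj, hA, hB⟩ := h
  have hwA : w ∉ A := fun hx => hwAB (Finset.mem_union_left _ hx)
  have hwB : w ∉ B := fun hx => hwAB (Finset.mem_union_right _ hx)
  -- u is the unique B-neighbor of v
  obtain ⟨b₀, hb₀, hb₀u⟩ := hA v hv
  have huniq : ∀ b, b ∈ B ∧ G.Adj v b → b = u := by
    intro b hb
    rw [hb₀u b hb, hb₀u u ⟨hu, hvu⟩]
  refine ⟨⟨?_, ?_, ?_⟩, ?_⟩
  · rw [Finset.disjoint_insert_right]
    exact ⟨hwA, Finset.disjoint_of_subset_right (Finset.erase_subset _ _) hdisj⟩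
  · intro a ha
    by_cases hav : a = v
    · subst hav
      refine ⟨w, ⟨Finset.mem_insert_self _ _, ((hw a).mpr rfl).symm⟩, ?_⟩
      rintro b ⟨hbmem, hab⟩
      rcases Finset.mem_insert.mp hbmem with rfl | hb
      · rfl
      · exact absurd (huniq b ⟨Finset.mem_of_mem_erase hb, hab⟩)
          (Finset.ne_of_mem_erase hb)
    · obtain ⟨b, ⟨hbB, hab⟩, hbu⟩ := hA a ha
      have hbne : b ≠ u := by
        intro rfl'
        subst rfl'
        obtain ⟨a', ha', ha'u⟩ := hB b hbB
        exact hav ((ha'u a ⟨ha, hab.symm⟩).trans (ha'u v ⟨hv, hvu.symm⟩).symm)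
      refine ⟨b, ⟨Finset.mem_insert_of_mem (Finset.mem_erase.mpr ⟨hbne, hbB⟩), hab⟩, ?_⟩
      rintro b' ⟨hb'mem, hab'⟩
      rcases Finset.mem_insert.mp hb'mem with rfl | hb'
      · exact absurd ((hw a).mp hab'.symm) hav
      · exact hbu b' ⟨Finset.mem_of_mem_erase hb', hab'⟩
  · intro b hb
    rcases Finset.mem_insert.mp hb with rfl | hb'
    · exact ⟨v, ⟨hv, (hw v).mpr rfl⟩, fun a ⟨_, hab⟩ => (hw a).mp hab⟩
    · exact hB b (Finset.mem_of_mem_erase hb')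
  · rw [Finset.card_insert_of_notMem (fun hx => hwB (Finset.mem_of_mem_erase hx)),
      Finset.card_erase_of_mem hu]
    exact Nat.succ_pred_eq_of_pos (Finset.card_pos.mpr ⟨u, hu⟩)
end

section
/- A set A ⊆ V(G) can be extended to a pair of perfectly matched sets (A,B) for some B if and only if, letting C(A) be the set of vertices in V(G) \ A with exactly one neighbor in A, every vertex of A has at least one neighbor in C(A). -/
/-- If `v` has exactly one neighbor in `A`, then two neighbors of `v` in `A` coincide. -/
lemma card_one_unique {V : Type*} [DecidableEq V] (G : SimpleGraph V) [DecidableRel G.Adj]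
    (A : Finset V) (v : V) (hv : (A.filter (fun x => G.Adj v x)).card = 1)
    {a a' : V} (ha : a ∈ A) (hadj : G.Adj v a) (ha' : a' ∈ A) (hadj' : G.Adj v a') :
    a = a' := by
  obtain ⟨x, hx⟩ := Finset.card_eq_one.mp hv
  have h1 : a ∈ A.filter (fun x => G.Adj v x) := Finset.mem_filter.mpr ⟨ha, hadj⟩
  have h2 : a' ∈ A.filter (fun x => G.Adj v x) := Finset.mem_filter.mpr ⟨ha', hadj'⟩
  rw [hx, Finset.mem_singleton] at h1 h2
  rw [h1, h2]

/-- `A` can be extended to a pair of perfectly matched sets `(A,B)` iff every vertex of `A`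
has a neighbor in `C(A)`, the set of vertices outside `A` with exactly one neighbor in `A`. -/
theorem pms_extension_iff {V : Type*} [Fintype V] [DecidableEq V]
    (G : SimpleGraph V) [DecidableRel G.Adj] (A : Finset V) :
    (∃ B : Finset V, IsPMS G A B) ↔
    (∀ a ∈ A, ∃ v ∈ Finset.univ.filter
        (fun v => v ∉ A ∧ (A.filter (fun x => G.Adj v x)).card = 1),
      G.Adj a v) := by
  constructor
  · rintro ⟨B, hdisj, hAB, hBA⟩ a ha
    obtain ⟨b, ⟨hbB, hab⟩, _⟩ := hAB a ha
    refine ⟨b, ?_, hab⟩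
    simp only [Finset.mem_filter, Finset.mem_univ, true_and]
    obtain ⟨a', ⟨ha'A, hba'⟩, hu'⟩ := hBA b hbB
    refine ⟨fun hbA => Finset.disjoint_left.mp hdisj hbA hbB, ?_⟩
    rw [Finset.card_eq_one]
    refine ⟨a', ?_⟩
    ext x
    simp only [Finset.mem_filter, Finset.mem_singleton]
    constructor
    · rintro ⟨hx, hadj⟩; exact hu' x ⟨hx, hadj⟩
    · rintro rfl; exact ⟨ha'A, hba'⟩
  · intro h
    choose g hg1 hg2 using h
    have hg1' : ∀ a (ha : a ∈ A), g a ha ∉ A ∧ (A.filter (fun x => G.Adj (g a ha) x)).card = 1 := by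
      intro a ha
      have := hg1 a ha
      simpa using this
    refine ⟨A.attach.image (fun x => g x.1 x.2), ?_, ?_, ?_⟩
    · rw [Finset.disjoint_left]
      intro a haA haB
      obtain ⟨⟨a', ha'⟩, _, heq⟩ := Finset.mem_image.mp haB
      exact (hg1' a' ha').1 (heq ▸ haA)
    · intro a ha
      refine ⟨g a ha, ⟨Finset.mem_image.mpr ⟨⟨a, ha⟩, Finset.mem_attach _ _, rfl⟩, hg2 a ha⟩, ?_⟩
      rintro b ⟨hbB, hab⟩
      obtain ⟨⟨a', ha'⟩, _, heq⟩ := Finset.mem_image.mp hbB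
      subst heq
      have : a' = a :=
        card_one_unique G A _ (hg1' a' ha').2 ha' (hg2 a' ha').symm ha hab.symm
      subst this
      rfl
    · intro b hbB
      obtain ⟨⟨a, ha⟩, _, heq⟩ := Finset.mem_image.mp hbB
      subst heq
      refine ⟨a, ⟨ha, (hg2 a ha).symm⟩, ?_⟩
      rintro a' ⟨ha', hadj'⟩
      exact card_one_unique G A _ (hg1' a ha).2 ha' hadj' ha (hg2 a ha).symm
end
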